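/- In the setting of the GUCB policy with ν_n ≥ 4γ̄² log n, for each k ≠ k*: E[T_k(n)²] ≤ (8ν_n/Δ_k² + 5)², for all n. -/

import Mathlib

open MeasureTheory ProbabilityTheory Finset
open scoped ENNReal

theorem mgf_sum_aux
    {Ω : Type*} [MeasurableSpace Ω] (P : Measure Ω) [IsProbabilityMeasure P]
    {K : ℕ} (μ γ : Fin K → ℝ)
    (X : Fin K → ℕ → Ω → ℝ)
    (hmeas : ∀ k j, Measurable (X k j))
    (hindep : iIndepFun (fun p : Fin K × ℕ => X p.1 p.2) P)
    (hsub : ∀ k j, ∀ lam : ℝ,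
      ∫⁻ ω, ENNReal.ofReal (Real.exp (lam * (X k j ω - μ k))) ∂P ≤
        ENNReal.ofReal (Real.exp (γ k ^ 2 * lam ^ 2 / 2)))
    (k : Fin K) (lam : ℝ) (s : ℕ) :
    ∫⁻ ω, ENNReal.ofReal (Real.exp (lam * ∑ j ∈ Finset.range s, (X k j ω - μ k))) ∂P ≤
      ENNReal.ofReal (Real.exp (s * (γ k ^ 2 * lam ^ 2 / 2))) := by
  -- the ℝ≥0∞-valued family
  set g : Fin K × ℕ → Ω → ℝ≥0∞ :=
    fun p ω => ENNReal.ofReal (Real.exp (lam * (X p.1 p.2 ω - μ p.1))) with hg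
  have hgmeas : ∀ p, Measurable (g p) := fun p =>
    (ENNReal.measurable_ofReal.comp (Real.measurable_exp.comp
      (((hmeas p.1 p.2).sub measurable_const).const_mul lam)))
  have hgindep : iIndepFun g P := by
    exact hindep.comp
      (fun p (b : ℝ) => ENNReal.ofReal (Real.exp (lam * (b - μ p.1))))
      (fun p => ENNReal.measurable_ofReal.comp (Real.measurable_exp.comp
        ((measurable_id.sub measurable_const).const_mul lam)))
  have key : ∀ s : ℕ, ∫⁻ ω, ∏ j ∈ Finset.range s, g (k, j) ω ∂P ≤
      ENNReal.ofReal (Real.exp (γ k ^ 2 * lam ^ 2 / 2)) ^ s := by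
    intro s
    induction s with
    | zero => simp
    | succ s ih =>
      have hemb : Function.Injective (fun j : ℕ => ((k, j) : Fin K × ℕ)) := by
        intro a b h; simpa using congrArg Prod.snd h
      set S : Finset (Fin K × ℕ) :=
        (Finset.range s).map ⟨fun j => (k, j), hemb⟩ with hS
      have hnotmem : (k, s) ∉ S := by simp [hS]
      have hip : IndepFun (∏ p ∈ S, g p) (g (k, s)) P :=
        hgindep.indepFun_finsetProd_of_notMem hgmeas hnotmem
      have hprodeq : (∏ p ∈ S, g p) = fun ω => ∏ j ∈ Finset.range s, g (k, j) ω := by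
        funext ω
        simp [hS, Finset.prod_map, Finset.prod_apply]
      have hmul : ∫⁻ ω, (∏ j ∈ Finset.range s, g (k, j) ω) * g (k, s) ω ∂P =
          (∫⁻ ω, ∏ j ∈ Finset.range s, g (k, j) ω ∂P) * ∫⁻ ω, g (k, s) ω ∂P := by
        have hmeasS : Measurable (∏ p ∈ S, g p) := by
          rw [hprodeq]
          exact Finset.measurable_prod _ fun j _ => hgmeas (k, j)
        have := lintegral_mul_eq_lintegral_mul_lintegral_of_indepFun
          (μ := P) (f := ∏ p ∈ S, g p) (g := g (k, s))
          hmeasS (hgmeas (k, s)) hip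
        rw [hprodeq] at this
        simpa using this
      calc ∫⁻ ω, ∏ j ∈ Finset.range (s+1), g (k, j) ω ∂P
          = ∫⁻ ω, (∏ j ∈ Finset.range s, g (k, j) ω) * g (k, s) ω ∂P := by
            simp [Finset.prod_range_succ]
        _ = (∫⁻ ω, ∏ j ∈ Finset.range s, g (k, j) ω ∂P) * ∫⁻ ω, g (k, s) ω ∂P := hmul
        _ ≤ ENNReal.ofReal (Real.exp (γ k ^ 2 * lam ^ 2 / 2)) ^ s *
              ENNReal.ofReal (Real.exp (γ k ^ 2 * lam ^ 2 / 2)) :=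
            mul_le_mul' ih (hsub k s lam)
        _ = ENNReal.ofReal (Real.exp (γ k ^ 2 * lam ^ 2 / 2)) ^ (s+1) := by ring
  have heq : ∀ ω, ENNReal.ofReal (Real.exp (lam * ∑ j ∈ Finset.range s, (X k j ω - μ k))) =
      ∏ j ∈ Finset.range s, g (k, j) ω := by
    intro ω
    rw [Finset.mul_sum, Real.exp_sum, ← ENNReal.ofReal_prod_of_nonneg (fun j _ => (Real.exp_pos _).le)]
  calc ∫⁻ ω, ENNReal.ofReal (Real.exp (lam * ∑ j ∈ Finset.range s, (X k j ω - μ k))) ∂P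
      = ∫⁻ ω, ∏ j ∈ Finset.range s, g (k, j) ω ∂P := by simp_rw [heq]
    _ ≤ ENNReal.ofReal (Real.exp (γ k ^ 2 * lam ^ 2 / 2)) ^ s := key s
    _ = ENNReal.ofReal (Real.exp (s * (γ k ^ 2 * lam ^ 2 / 2))) := by
        rw [← ENNReal.ofReal_pow (Real.exp_pos _).le, ← Real.exp_nat_mul]


section
variable {Ω : Type*} [MeasurableSpace Ω] (P : Measure Ω) [IsProbabilityMeasure P]
  {K : ℕ} (μ γ : Fin K → ℝ) (X : Fin K → ℕ → Ω → ℝ)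

theorem chernoff_core
    [IsProbabilityMeasure P]
    (hmeas : ∀ k j, Measurable (X k j))
    (hindep : iIndepFun (fun p : Fin K × ℕ => X p.1 p.2) P)
    (hsub : ∀ k j, ∀ lam : ℝ,
      ∫⁻ ω, ENNReal.ofReal (Real.exp (lam * (X k j ω - μ k))) ∂P ≤
        ENNReal.ofReal (Real.exp (γ k ^ 2 * lam ^ 2 / 2)))
    (k : Fin K) (s : ℕ) (lam b : ℝ) :
    P {ω | b ≤ lam * ∑ j ∈ Finset.range s, (X k j ω - μ k)} ≤
      ENNReal.ofReal (Real.exp (s * (γ k ^ 2 * lam ^ 2 / 2) - b)) := by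
  set S : Ω → ℝ := fun ω => ∑ j ∈ Finset.range s, (X k j ω - μ k) with hS
  have hSmeas : Measurable S :=
    Finset.measurable_sum _ fun j _ => (hmeas k j).sub measurable_const
  have hfmeas : Measurable fun ω => ENNReal.ofReal (Real.exp (lam * S ω)) :=
    ENNReal.measurable_ofReal.comp (Real.measurable_exp.comp (hSmeas.const_mul lam))
  have hset : {ω | b ≤ lam * S ω} =
      {ω | ENNReal.ofReal (Real.exp b) ≤ ENNReal.ofReal (Real.exp (lam * S ω))} := by
    ext ω
    simp only [Set.mem_setOf_eq]
    rw [ENNReal.ofReal_le_ofReal_iff (Real.exp_pos _).le, Real.exp_le_exp]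
  have hmarkov := mul_meas_ge_le_lintegral₀ (μ := P)
    (f := fun ω => ENNReal.ofReal (Real.exp (lam * S ω))) hfmeas.aemeasurable
    (ENNReal.ofReal (Real.exp b))
  have hmgf := mgf_sum_aux P μ γ X hmeas hindep hsub k lam s
  have h1 : ENNReal.ofReal (Real.exp b) * P {ω | b ≤ lam * S ω} ≤
      ENNReal.ofReal (Real.exp (s * (γ k ^ 2 * lam ^ 2 / 2))) := by
    rw [hset]
    exact le_trans hmarkov hmgf
  have hb0 : (ENNReal.ofReal (Real.exp b)) ≠ 0 := by
    simp [ENNReal.ofReal_eq_zero, not_le, Real.exp_pos]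
  have hbtop : (ENNReal.ofReal (Real.exp b)) ≠ ⊤ := ENNReal.ofReal_ne_top
  have h2 : P {ω | b ≤ lam * S ω} ≤
      ENNReal.ofReal (Real.exp (s * (γ k ^ 2 * lam ^ 2 / 2))) / ENNReal.ofReal (Real.exp b) := by
    rw [ENNReal.le_div_iff_mul_le (Or.inl hb0) (Or.inl hbtop), mul_comm]
    exact h1
  refine h2.trans_eq ?_
  rw [← ENNReal.ofReal_div_of_pos (Real.exp_pos _), ← Real.exp_sub]

theorem chernoff_tails
    (hγpos : ∀ k, 0 < γ k)
    (hmeas : ∀ k j, Measurable (X k j))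
    (hindep : iIndepFun (fun p : Fin K × ℕ => X p.1 p.2) P)
    (hsub : ∀ k j, ∀ lam : ℝ,
      ∫⁻ ω, ENNReal.ofReal (Real.exp (lam * (X k j ω - μ k))) ∂P ≤
        ENNReal.ofReal (Real.exp (γ k ^ 2 * lam ^ 2 / 2)))
    (k : Fin K) (s : ℕ) (hs : 1 ≤ s) (a : ℝ) (ha : 0 ≤ a) :
    P {ω | a ≤ ∑ j ∈ Finset.range s, (X k j ω - μ k)} ≤
        ENNReal.ofReal (Real.exp (-(a ^ 2) / (2 * s * γ k ^ 2))) ∧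
    P {ω | ∑ j ∈ Finset.range s, (X k j ω - μ k) ≤ -a} ≤
        ENNReal.ofReal (Real.exp (-(a ^ 2) / (2 * s * γ k ^ 2))) := by
  have hs0 : (0:ℝ) < s := by exact_mod_cast hs
  have hγ0 : (0:ℝ) < γ k ^ 2 := pow_pos (hγpos k) 2
  set lam : ℝ := a / (s * γ k ^ 2) with hlam
  have hlam0 : 0 ≤ lam := div_nonneg ha (by positivity)
  have hexp : s * (γ k ^ 2 * lam ^ 2 / 2) - lam * a = -(a ^ 2) / (2 * s * γ k ^ 2) := by
    rw [hlam]; field_simp; ring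
  constructor
  · have hsub1 : {ω | a ≤ ∑ j ∈ Finset.range s, (X k j ω - μ k)} ⊆
        {ω | lam * a ≤ lam * ∑ j ∈ Finset.range s, (X k j ω - μ k)} := by
      intro ω hω; exact mul_le_mul_of_nonneg_left hω hlam0
    refine (measure_mono hsub1).trans ?_
    have := chernoff_core P μ γ X hmeas hindep hsub k s lam (lam * a)
    rwa [hexp] at this
  · have hsub1 : {ω | (∑ j ∈ Finset.range s, (X k j ω - μ k)) ≤ -a} ⊆
        {ω | lam * a ≤ (-lam) * ∑ j ∈ Finset.range s, (X k j ω - μ k)} := by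
      intro ω hω
      simp only [Set.mem_setOf_eq] at hω ⊢
      nlinarith [mul_le_mul_of_nonneg_left hω hlam0]
    refine (measure_mono hsub1).trans ?_
    have := chernoff_core P μ γ X hmeas hindep hsub k s (-lam) (lam * a)
    have hexp2 : s * (γ k ^ 2 * (-lam) ^ 2 / 2) - lam * a = -(a ^ 2) / (2 * s * γ k ^ 2) := by
      rw [← hexp]; ring_nf
    rwa [hexp2] at this

end


theorem ucb_event_prob
    {Ω : Type*} [MeasurableSpace Ω] (P : Measure Ω) [IsProbabilityMeasure P]
    {K : ℕ} (μ γ : Fin K → ℝ) (X : Fin K → ℕ → Ω → ℝ)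
    (hγpos : ∀ k, 0 < γ k)
    (hmeas : ∀ k j, Measurable (X k j))
    (hindep : iIndepFun (fun p : Fin K × ℕ => X p.1 p.2) P)
    (hsub : ∀ k j, ∀ lam : ℝ,
      ∫⁻ ω, ENNReal.ofReal (Real.exp (lam * (X k j ω - μ k))) ∂P ≤
        ENNReal.ofReal (Real.exp (γ k ^ 2 * lam ^ 2 / 2)))
    (k : Fin K) (s : ℕ) (hs : 1 ≤ s) (w : ℝ) (hw : 0 ≤ w) :
    P {ω | (∑ j ∈ Finset.range s, X k j ω) / (s:ℝ) + Real.sqrt (2 * w / s) ≤ μ k} ≤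
        ENNReal.ofReal (Real.exp (-w / γ k ^ 2)) ∧
    P {ω | μ k + Real.sqrt (2 * w / s) ≤ (∑ j ∈ Finset.range s, X k j ω) / (s:ℝ)} ≤
        ENNReal.ofReal (Real.exp (-w / γ k ^ 2)) := by
  have hs0 : (0:ℝ) < s := by exact_mod_cast hs
  set a : ℝ := Real.sqrt (2 * s * w) with ha_def
  have ha : 0 ≤ a := Real.sqrt_nonneg _
  have ha2 : a ^ 2 = 2 * s * w := Real.sq_sqrt (by positivity)
  have hsr : a = (s:ℝ) * Real.sqrt (2 * w / s) := by
    rw [ha_def, show 2 * (s:ℝ) * w = (s:ℝ)^2 * (2 * w / s) by field_simp,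
      Real.sqrt_mul (by positivity), Real.sqrt_sq hs0.le]
  have hSsum : ∀ ω, ∑ j ∈ Finset.range s, (X k j ω - μ k) =
      (∑ j ∈ Finset.range s, X k j ω) - s * μ k := by
    intro ω
    rw [Finset.sum_sub_distrib, Finset.sum_const, Finset.card_range, nsmul_eq_mul]
  have hexp : -(a ^ 2) / (2 * s * γ k ^ 2) = -w / γ k ^ 2 := by
    rw [ha2, show 2 * (s:ℝ) * w = w * (2*s) by ring,
      show 2 * (s:ℝ) * γ k ^ 2 = γ k ^ 2 * (2*s) by ring, neg_div, neg_div,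
      mul_div_mul_right _ _ (by positivity : (2*(s:ℝ)) ≠ 0)]
  set r : ℝ := Real.sqrt (2 * w / s) with hr_def
  have htails := chernoff_tails P μ γ X hγpos hmeas hindep hsub k s hs a ha
  constructor
  · have hset : {ω | (∑ j ∈ Finset.range s, X k j ω) / (s:ℝ) + r ≤ μ k} =
        {ω | ∑ j ∈ Finset.range s, (X k j ω - μ k) ≤ -a} := by
      ext ω
      simp only [Set.mem_setOf_eq]
      rw [hSsum, hsr]
      set Y := ∑ j ∈ Finset.range s, X k j ω
      constructor
      · intro h
        have h2 : Y / s ≤ μ k - r := by linarith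
        have h3 : Y ≤ (μ k - r) * s := (div_le_iff₀ hs0).mp h2
        nlinarith
      · intro h
        have h3 : Y ≤ (μ k - r) * s := by nlinarith
        have h2 : Y / s ≤ μ k - r := (div_le_iff₀ hs0).mpr h3
        linarith
    rw [hset, ← hexp]
    exact htails.2
  · have hset : {ω | μ k + r ≤ (∑ j ∈ Finset.range s, X k j ω) / (s:ℝ)} =
        {ω | a ≤ ∑ j ∈ Finset.range s, (X k j ω - μ k)} := by
      ext ω
      simp only [Set.mem_setOf_eq]
      rw [hSsum, hsr]
      set Y := ∑ j ∈ Finset.range s, X k j ω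
      constructor
      · intro h
        have h3 : (μ k + r) * s ≤ Y := (le_div_iff₀ hs0).mp h
        nlinarith
      · intro h
        have h3 : (μ k + r) * s ≤ Y := by nlinarith
        exact (le_div_iff₀ hs0).mpr h3
    rw [hset, ← hexp]
    exact htails.1


set_option maxHeartbeats 1000000 in
theorem stmt_14
    {Ω : Type*} [MeasurableSpace Ω] (P : Measure Ω) [IsProbabilityMeasure P]
    (K : ℕ) (hK : 1 ≤ K)
    (μ γ : Fin K → ℝ) (kstar : Fin K) (γbar : ℝ)
    (hγpos : ∀ k, 0 < γ k) (hγbar : ∀ k, γ k ≤ γbar)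
    (hgap : ∀ k, k ≠ kstar → μ k < μ kstar)
    (X : Fin K → ℕ → Ω → ℝ)
    (hmeas : ∀ k j, Measurable (X k j))
    (hindep : iIndepFun (fun p : Fin K × ℕ => X p.1 p.2) P)
    (hident : ∀ k j, IdentDistrib (X k j) (X k 0) P P)
    (hint : ∀ k j, Integrable (X k j) P)
    (hmean : ∀ k, ∫ ω, X k 0 ω ∂P = μ k)
    (hsub : ∀ k j, ∀ lam : ℝ,
      ∫⁻ ω, ENNReal.ofReal (Real.exp (lam * (X k j ω - μ k))) ∂P ≤
        ENNReal.ofReal (Real.exp (γ k ^ 2 * lam ^ 2 / 2)))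
    (ν : ℕ → ℝ) (hνmono : Monotone ν)
    (T : ℕ → Fin K → Ω → ℕ) (I : ℕ → Ω → Fin K)
    (hTmeas : ∀ n k, Measurable (fun ω => T n k ω))
    (hImeas : ∀ n, Measurable (I n))
    (hinit : ∀ k ω, T K k ω = 1)
    (hTrec : ∀ n, K ≤ n → ∀ k ω,
      T (n + 1) k ω = T n k ω + if I (n + 1) ω = k then 1 else 0)
    (hargmax : ∀ n, K ≤ n → ∀ ω k,
      (∑ j ∈ Finset.range (T n k ω), X k j ω) / (T n k ω : ℝ) +
          Real.sqrt (2 * ν (n + 1) / (T n k ω : ℝ)) ≤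
        (∑ j ∈ Finset.range (T n (I (n + 1) ω) ω), X (I (n + 1) ω) j ω) /
            (T n (I (n + 1) ω) ω : ℝ) +
          Real.sqrt (2 * ν (n + 1) / (T n (I (n + 1) ω) ω : ℝ)))
    (hν : ∀ n : ℕ, 4 * γbar ^ 2 * Real.log n ≤ ν n) :
    ∀ k, k ≠ kstar → ∀ n, K ≤ n →
      (∫ ω, ((T n k ω : ℝ)) ^ 2 ∂P) ≤ (8 * ν n / (μ kstar - μ k) ^ 2 + 5) ^ 2 := by
  classical
  intro k hkne n hn
  have hK2 : 2 ≤ K := by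
    have hnt : Nontrivial (Fin K) := ⟨⟨k, kstar, hkne⟩⟩
    have := Fintype.one_lt_card (α := Fin K)
    have h1 : 1 < K := by simpa using this
    omega
  have hn2 : 2 ≤ n := le_trans hK2 hn
  set Δ : ℝ := μ kstar - μ k with hΔdef
  have hΔ : 0 < Δ := sub_pos.mpr (hgap k hkne)
  have hνn0 : 0 ≤ ν n := by
    have h1 := hν n
    have hlog : 0 ≤ Real.log n :=
      Real.log_nonneg (by exact_mod_cast le_trans (by norm_num : 1 ≤ 2) hn2)
    nlinarith [sq_nonneg γbar]
  have hνt0 : ∀ t : ℕ, 0 ≤ ν (t+1) := by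
    intro t
    have h1 := hν (t+1)
    have hlog : 0 ≤ Real.log ((t:ℝ)+1) := Real.log_nonneg (by
      have := Nat.cast_nonneg (α := ℝ) t; linarith)
    have : ((t+1 : ℕ) : ℝ) = (t:ℝ)+1 := by push_cast; ring
    rw [this] at h1
    nlinarith [sq_nonneg γbar]
  set x : ℝ := 8 * ν n / Δ ^ 2 with hxdef
  have hx0 : 0 ≤ x := by positivity
  set u' : ℕ := ⌈x⌉₊ + 1 with hu'def
  have hu'1 : 1 ≤ u' := by omega
  have hu'gt : x < u' := by
    have h := Nat.le_ceil x
    have : ((u' : ℕ) : ℝ) = (⌈x⌉₊ : ℝ) + 1 := by rw [hu'def]; push_cast; ring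
    rw [this]; linarith
  have hu'le : (u' : ℝ) ≤ x + 2 := by
    have h := Nat.ceil_lt_add_one hx0
    have : ((u' : ℕ) : ℝ) = (⌈x⌉₊ : ℝ) + 1 := by rw [hu'def]; push_cast; ring
    rw [this]; linarith
  -- pull count facts
  have hTsum : ∀ t, K ≤ t → ∀ ω, ∑ j, T t j ω = t := by
    intro t ht
    induction t, ht using Nat.le_induction with
    | base => intro ω; simp [hinit]
    | succ m hm ih =>
      intro ω
      simp only [hTrec m hm]
      rw [Finset.sum_add_distrib, ih ω]
      simp [Finset.sum_ite_eq]
  have hT1 : ∀ t, K ≤ t → ∀ j ω, 1 ≤ T t j ω := by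
    intro t ht
    induction t, ht using Nat.le_induction with
    | base => intro j ω; simp [hinit]
    | succ m hm ih =>
      intro j ω
      rw [hTrec m hm]
      exact le_trans (ih j ω) (Nat.le_add_right _ _)
  have hTle : ∀ t, K ≤ t → ∀ j ω, T t j ω ≤ t := by
    intro t ht j ω
    refine le_trans (Finset.single_le_sum (f := fun j => T t j ω)
      (fun _ _ => Nat.zero_le _) (Finset.mem_univ j)) (le_of_eq (hTsum t ht ω))
  -- bad events
  set A : ℕ → ℕ → Set Ω := fun t s =>
    {ω | (∑ j ∈ Finset.range s, X kstar j ω) / (s:ℝ) +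
      Real.sqrt (2 * ν (t+1) / s) ≤ μ kstar} with hAdef
  set B : ℕ → ℕ → Set Ω := fun t s =>
    {ω | μ k + Real.sqrt (2 * ν (t+1) / s) ≤
      (∑ j ∈ Finset.range s, X k j ω) / (s:ℝ)} with hBdef
  set Bad : ℕ → Set Ω := fun t =>
    (⋃ s ∈ Finset.Icc 1 t, A t s) ∪ ⋃ s ∈ Finset.Icc 1 t, B t s with hBaddef
  -- probability bound for bad events
  have hq : ∀ (t : ℕ) (j : Fin K), K ≤ t →
      Real.exp (-(ν (t+1)) / γ j ^ 2) ≤ (((t:ℝ)+1) ^ 4)⁻¹ := by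
    intro t j ht
    have ht1 : (1:ℝ) ≤ (t:ℝ) + 1 := by
      have := Nat.cast_nonneg (α := ℝ) t; linarith
    have hlog : 0 ≤ Real.log ((t:ℝ)+1) := Real.log_nonneg ht1
    have hγj : 0 < γ j ^ 2 := pow_pos (hγpos j) 2
    have hγle : γ j ^ 2 ≤ γbar ^ 2 := by nlinarith [hγpos j, hγbar j]
    have hν1 : 4 * γbar ^ 2 * Real.log ((t:ℝ)+1) ≤ ν (t+1) := by
      have h := hν (t+1)
      have hc : ((t+1 : ℕ) : ℝ) = (t:ℝ)+1 := by push_cast; ring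
      rwa [hc] at h
    have h2 : 4 * Real.log ((t:ℝ)+1) ≤ ν (t+1) / γ j ^ 2 := by
      rw [le_div_iff₀ hγj]
      nlinarith
    calc Real.exp (-(ν (t+1)) / γ j ^ 2)
        ≤ Real.exp (-(4 * Real.log ((t:ℝ)+1))) := by
          rw [Real.exp_le_exp, neg_div]; linarith
      _ = (((t:ℝ)+1) ^ 4)⁻¹ := by
          rw [Real.exp_neg,
            show (4:ℝ) * Real.log ((t:ℝ)+1) = ((4:ℕ):ℝ) * Real.log ((t:ℝ)+1) by norm_num,
            Real.exp_nat_mul, Real.exp_log (by linarith)]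
  set p : ℕ → ℝ := fun t => 2 * t * (((t:ℝ)+1) ^ 4)⁻¹ with hpdef
  have hp0 : ∀ t, 0 ≤ p t := fun t => by rw [hpdef]; positivity
  have hBadP : ∀ t, K ≤ t → P (Bad t) ≤ ENNReal.ofReal (p t) := by
    intro t ht
    have hP1 : ∀ s ∈ Finset.Icc 1 t, P (A t s) ≤ ENNReal.ofReal ((((t:ℝ)+1) ^ 4)⁻¹) := by
      intro s hsmem
      rw [Finset.mem_Icc] at hsmem
      refine le_trans (ucb_event_prob P μ γ X hγpos hmeas hindep hsub kstar s hsmem.1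
        (ν (t+1)) (hνt0 t)).1 ?_
      exact ENNReal.ofReal_le_ofReal (by simpa [neg_div] using hq t kstar ht)
    have hP2 : ∀ s ∈ Finset.Icc 1 t, P (B t s) ≤ ENNReal.ofReal ((((t:ℝ)+1) ^ 4)⁻¹) := by
      intro s hsmem
      rw [Finset.mem_Icc] at hsmem
      refine le_trans (ucb_event_prob P μ γ X hγpos hmeas hindep hsub k s hsmem.1
        (ν (t+1)) (hνt0 t)).2 ?_
      exact ENNReal.ofReal_le_ofReal (by simpa [neg_div] using hq t k ht)
    have hunion : P (Bad t) ≤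
        (∑ s ∈ Finset.Icc 1 t, P (A t s)) + ∑ s ∈ Finset.Icc 1 t, P (B t s) := by
      refine le_trans (measure_union_le _ _) ?_
      exact add_le_add (measure_biUnion_finset_le _ _) (measure_biUnion_finset_le _ _)
    refine hunion.trans ?_
    have hcard : (Finset.Icc 1 t).card = t := by simp
    calc (∑ s ∈ Finset.Icc 1 t, P (A t s)) + ∑ s ∈ Finset.Icc 1 t, P (B t s)
        ≤ (∑ _s ∈ Finset.Icc 1 t, ENNReal.ofReal ((((t:ℝ)+1) ^ 4)⁻¹)) +
            ∑ _s ∈ Finset.Icc 1 t, ENNReal.ofReal ((((t:ℝ)+1) ^ 4)⁻¹) :=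
          add_le_add (Finset.sum_le_sum hP1) (Finset.sum_le_sum hP2)
      _ = ENNReal.ofReal (p t) := by
          rw [Finset.sum_const, hcard]
          have h1 : (t : ℕ) • ENNReal.ofReal ((((t:ℝ)+1)^4)⁻¹) +
              t • ENNReal.ofReal ((((t:ℝ)+1)^4)⁻¹)
              = ((2*t : ℕ) : ℝ≥0∞) * ENNReal.ofReal ((((t:ℝ)+1)^4)⁻¹) := by
            rw [nsmul_eq_mul]
            push_cast
            ring
          rw [h1, ← ENNReal.ofReal_natCast (2*t),
            ← ENNReal.ofReal_mul (Nat.cast_nonneg _)]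
          simp only [hpdef]
          congr 1
          push_cast
          ring
  -- the counting events
  set E : ℕ → Set Ω := fun t => {ω | I (t+1) ω = k ∧ u' ≤ T t k ω} with hEdef
  have hEmeas : ∀ t, MeasurableSet (E t) := by
    intro t
    have h1 : MeasurableSet (I (t+1) ⁻¹' {k}) := hImeas (t+1) (measurableSet_singleton k)
    have h2 : MeasurableSet ((fun ω => T t k ω) ⁻¹' (Set.Ici u')) := hTmeas t k trivial
    have he : E t = (I (t+1) ⁻¹' {k}) ∩ ((fun ω => T t k ω) ⁻¹' (Set.Ici u')) := by
      ext ω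
      simp [hEdef, Set.mem_Ici, Set.mem_preimage, Set.mem_singleton_iff]
    rw [he]; exact h1.inter h2
  set indN : ℕ → Ω → ℕ := fun t ω => if ω ∈ E t then 1 else 0 with hindNdef
  have hindN1 : ∀ t ω, indN t ω ≤ 1 := by
    intro t ω
    by_cases h : ω ∈ E t <;> simp [hindNdef, h]
  -- pathwise bound on T
  have hpath1 : ∀ m, K ≤ m → ∀ ω, T m k ω ≤ u' + ∑ t ∈ Finset.Ico K m, indN t ω := by
    intro m hm
    induction m, hm using Nat.le_induction with
    | base => intro ω; simp [hinit]; omega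
    | succ m hm ih =>
      intro ω
      rw [hTrec m hm, Finset.sum_Ico_succ_top hm]
      by_cases hIk : I (m+1) ω = k
      · by_cases hcnt : u' ≤ T m k ω
        · have hone : indN m ω = 1 := by simp [hindNdef, hEdef, hIk, hcnt]
          rw [hone, if_pos hIk]
          have := ih ω
          omega
        · rw [if_pos hIk]
          omega
      · rw [if_neg hIk]
        have := ih ω
        omega
  -- pathwise bound on the square of the count
  have hpath3 : ∀ m, K ≤ m → ∀ ω,
      (∑ t ∈ Finset.Ico K m, indN t ω) ^ 2 ≤ ∑ t ∈ Finset.Ico K m, (2*t+1) * indN t ω := by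
    intro m hm
    induction m, hm using Nat.le_induction with
    | base => intro ω; simp
    | succ m hm ih =>
      intro ω
      rw [Finset.sum_Ico_succ_top hm, Finset.sum_Ico_succ_top hm]
      have hNle : (∑ t ∈ Finset.Ico K m, indN t ω) ≤ m := by
        calc ∑ t ∈ Finset.Ico K m, indN t ω ≤ ∑ _t ∈ Finset.Ico K m, 1 :=
            Finset.sum_le_sum (fun t _ => hindN1 t ω)
          _ = m - K := by simp
          _ ≤ m := Nat.sub_le _ _
      have hi : indN m ω = 0 ∨ indN m ω = 1 := by
        by_cases h : ω ∈ E m <;> simp [hindNdef, h]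
      have hihω := ih ω
      rcases hi with h | h <;> rw [h]
      · simpa using hihω
      · calc (∑ t ∈ Finset.Ico K m, indN t ω + 1) ^ 2
            = (∑ t ∈ Finset.Ico K m, indN t ω) ^ 2 +
              (2 * (∑ t ∈ Finset.Ico K m, indN t ω) + 1) := by ring
          _ ≤ (∑ t ∈ Finset.Ico K m, (2*t+1) * indN t ω) + (2*m+1) * 1 := by
              refine add_le_add hihω ?_
              omega
  -- bad event inclusion
  have hpath2 : ∀ t, K ≤ t → t < n → E t ⊆ Bad t := by
    intro t ht htn ω hω
    obtain ⟨hIk, hcnt⟩ := hω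
    by_contra hbad
    rw [hBaddef] at hbad
    simp only [Set.mem_union, Set.mem_iUnion, not_or, not_exists] at hbad
    obtain ⟨hA, hB⟩ := hbad
    have hs1 : 1 ≤ T t kstar ω := hT1 t ht kstar ω
    have hs2 : T t kstar ω ≤ t := hTle t ht kstar ω
    have hk1 : 1 ≤ T t k ω := hT1 t ht k ω
    have hk2 : T t k ω ≤ t := hTle t ht k ω
    have hAs := hA (T t kstar ω) (Finset.mem_Icc.mpr ⟨hs1, hs2⟩)
    have hBs := hB (T t k ω) (Finset.mem_Icc.mpr ⟨hk1, hk2⟩)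
    rw [hAdef] at hAs
    rw [hBdef] at hBs
    simp only [Set.mem_setOf_eq, not_le] at hAs hBs
    have harg := hargmax t ht ω kstar
    rw [hIk] at harg
    have hchain : μ kstar < μ k + 2 * Real.sqrt (2 * ν (t+1) / (T t k ω : ℝ)) := by
      linarith
    have hsk0 : (0:ℝ) < (T t k ω : ℝ) := by exact_mod_cast hk1
    have hr2 : (Real.sqrt (2 * ν (t+1) / (T t k ω : ℝ)))^2 = 2 * ν (t+1) / (T t k ω : ℝ) :=
      Real.sq_sqrt (div_nonneg (by linarith [hνt0 t]) hsk0.le)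
    have hΔr : Δ < 2 * Real.sqrt (2 * ν (t+1) / (T t k ω : ℝ)) := by
      rw [hΔdef]; linarith
    have h1 : Δ ^ 2 < 8 * ν (t+1) / (T t k ω : ℝ) := by
      calc Δ ^ 2 < (2 * Real.sqrt (2 * ν (t+1) / (T t k ω : ℝ))) ^ 2 := by
            exact pow_lt_pow_left₀ hΔr hΔ.le (by norm_num)
        _ = 4 * (Real.sqrt (2 * ν (t+1) / (T t k ω : ℝ)))^2 := by ring
        _ = 8 * ν (t+1) / (T t k ω : ℝ) := by rw [hr2]; ring
    have h1' : Δ ^ 2 * (T t k ω : ℝ) < 8 * ν (t+1) := by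
      exact (lt_div_iff₀ hsk0).mp h1
    have hmono : ν (t+1) ≤ ν n := hνmono (by omega)
    have hxk : x < (T t k ω : ℝ) := lt_of_lt_of_le hu'gt (by exact_mod_cast hcnt)
    have hxeq : 8 * ν n = x * Δ ^ 2 := by
      rw [hxdef]; field_simp
    nlinarith [mul_pos (sub_pos.mpr hxk) (pow_pos hΔ 2)]
  -- real-valued indicators and integration
  set ind : ℕ → Ω → ℝ := fun t => (E t).indicator (fun _ => (1:ℝ)) with hinddef
  have hindint : ∀ t, Integrable (ind t) P := fun t =>
    (integrable_const (1:ℝ)).indicator (hEmeas t)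
  have hindval : ∀ t ω, ((indN t ω : ℕ) : ℝ) = ind t ω := by
    intro t ω
    by_cases h : ω ∈ E t <;> simp [hindNdef, hinddef, Set.indicator_apply, h]
  have hind_nonneg : ∀ t ω, 0 ≤ ind t ω := fun t ω =>
    Set.indicator_nonneg (fun _ _ => zero_le_one) ω
  have hindInt : ∀ t, K ≤ t → t < n → ∫ ω, ind t ω ∂P ≤ p t := by
    intro t ht htn
    rw [hinddef]
    have h0 : (fun ω => (E t).indicator (fun _ => (1:ℝ)) ω) = (E t).indicator 1 := rfl
    rw [h0, integral_indicator_one (hEmeas t)]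
    have h1 : P (E t) ≤ ENNReal.ofReal (p t) :=
      le_trans (measure_mono (hpath2 t ht htn)) (hBadP t ht)
    calc (P (E t)).toReal ≤ (ENNReal.ofReal (p t)).toReal :=
        ENNReal.toReal_mono ENNReal.ofReal_ne_top h1
      _ = p t := ENNReal.toReal_ofReal (hp0 t)
  set g : Ω → ℝ := fun ω => (u':ℝ)^2 + 2*(u':ℝ) * (∑ t ∈ Finset.Ico K n, ind t ω) +
      ∑ t ∈ Finset.Ico K n, (2*(t:ℝ)+1) * ind t ω with hgdef
  have i1 : Integrable (fun ω => 2*(u':ℝ) * (∑ t ∈ Finset.Ico K n, ind t ω)) P :=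
    (integrable_finset_sum _ (fun t _ => hindint t)).const_mul _
  have i2 : Integrable (fun ω => ∑ t ∈ Finset.Ico K n, (2*(t:ℝ)+1) * ind t ω) P :=
    integrable_finset_sum _ (fun t _ => (hindint t).const_mul _)
  have hgint : Integrable g P := by
    rw [hgdef]
    exact ((integrable_const _).add i1).add i2
  have hpoint : ∀ ω, ((T n k ω : ℝ))^2 ≤ g ω := by
    intro ω
    have h1 := hpath1 n hn ω
    have h3 := hpath3 n hn ω
    have hc1 : ((T n k ω : ℝ)) ≤ (u':ℝ) + ((∑ t ∈ Finset.Ico K n, indN t ω : ℕ):ℝ) := by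
      exact_mod_cast h1
    have hc0 : (0:ℝ) ≤ ((T n k ω : ℝ)) := Nat.cast_nonneg _
    have hNr : ((∑ t ∈ Finset.Ico K n, indN t ω : ℕ):ℝ) = ∑ t ∈ Finset.Ico K n, ind t ω := by
      push_cast
      exact Finset.sum_congr rfl (fun t _ => hindval t ω)
    have hQr : ((∑ t ∈ Finset.Ico K n, (2*t+1) * indN t ω : ℕ) : ℝ) =
        ∑ t ∈ Finset.Ico K n, (2*(t:ℝ)+1) * ind t ω := by
      push_cast
      exact Finset.sum_congr rfl (fun t _ => by rw [hindval])
    have hc3 : (((∑ t ∈ Finset.Ico K n, indN t ω : ℕ):ℝ))^2 ≤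
        ∑ t ∈ Finset.Ico K n, (2*(t:ℝ)+1) * ind t ω := by
      rw [← hQr]
      exact_mod_cast h3
    have hgω : g ω = (u':ℝ)^2 +
        2*(u':ℝ)*((∑ t ∈ Finset.Ico K n, indN t ω : ℕ):ℝ) +
        ∑ t ∈ Finset.Ico K n, (2*(t:ℝ)+1) * ind t ω := by
      rw [hgdef, hNr]
    rw [hgω]
    have hc4 : (0:ℝ) ≤ ((∑ t ∈ Finset.Ico K n, indN t ω : ℕ):ℝ) := Nat.cast_nonneg _
    have hc5 : (0:ℝ) ≤ ((u':ℕ):ℝ) := Nat.cast_nonneg _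
    nlinarith [hc1, hc0, hc3, hc4, hc5]
  have hTmeasR : Measurable (fun ω => ((T n k ω : ℝ))^2) :=
    (measurable_from_nat.comp (hTmeas n k)).pow_const 2
  have hTint : Integrable (fun ω => ((T n k ω : ℝ))^2) P := by
    refine Integrable.mono' (integrable_const ((n:ℝ)^2)) hTmeasR.aestronglyMeasurable ?_
    filter_upwards with ω
    have h := hTle n hn k ω
    rw [Real.norm_eq_abs, abs_of_nonneg (by positivity)]
    have hcast : ((T n k ω : ℝ)) ≤ (n:ℝ) := by exact_mod_cast h
    have hc0 : (0:ℝ) ≤ ((T n k ω : ℕ):ℝ) := Nat.cast_nonneg _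
    nlinarith [hc0, hcast]
  have hmain : ∫ ω, ((T n k ω : ℝ))^2 ∂P ≤ ∫ ω, g ω ∂P :=
    integral_mono hTint hgint hpoint
  -- compute/bound the integral of g
  have hgval : ∫ ω, g ω ∂P = (u':ℝ)^2 +
      2*(u':ℝ) * (∑ t ∈ Finset.Ico K n, ∫ ω, ind t ω ∂P) +
      ∑ t ∈ Finset.Ico K n, (2*(t:ℝ)+1) * ∫ ω, ind t ω ∂P := by
    have e1 : ∫ ω, ((u':ℝ)^2 + 2*(u':ℝ) * (∑ t ∈ Finset.Ico K n, ind t ω) +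
          ∑ t ∈ Finset.Ico K n, (2*(t:ℝ)+1) * ind t ω) ∂P
        = ∫ ω, ((u':ℝ)^2 + 2*(u':ℝ) * (∑ t ∈ Finset.Ico K n, ind t ω)) ∂P +
          ∫ ω, (∑ t ∈ Finset.Ico K n, (2*(t:ℝ)+1) * ind t ω) ∂P :=
      integral_add ((integrable_const _).add i1) i2
    have e2 : ∫ ω, ((u':ℝ)^2 + 2*(u':ℝ) * (∑ t ∈ Finset.Ico K n, ind t ω)) ∂P
        = (∫ _ω, ((u':ℝ)^2 : ℝ) ∂P) +
          ∫ ω, (2*(u':ℝ) * (∑ t ∈ Finset.Ico K n, ind t ω)) ∂P :=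
      integral_add (integrable_const _) i1
    have e3 : (∫ _ω, ((u':ℝ)^2 : ℝ) ∂P) = (u':ℝ)^2 := by simp
    have e4 : ∫ ω, (2*(u':ℝ) * (∑ t ∈ Finset.Ico K n, ind t ω)) ∂P
        = 2*(u':ℝ) * ∑ t ∈ Finset.Ico K n, ∫ ω, ind t ω ∂P := by
      rw [integral_const_mul, integral_finset_sum _ (fun t _ => hindint t)]
    have e5 : ∫ ω, (∑ t ∈ Finset.Ico K n, (2*(t:ℝ)+1) * ind t ω) ∂P
        = ∑ t ∈ Finset.Ico K n, (2*(t:ℝ)+1) * ∫ ω, ind t ω ∂P := by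
      rw [integral_finset_sum _ (fun t _ => (hindint t).const_mul _)]
      exact Finset.sum_congr rfl (fun t _ => integral_const_mul _ _)
    simp only [hgdef]
    rw [e1, e2, e3, e4, e5]
  -- telescoping sums
  have htel : ∀ m, K ≤ m →
      ∑ t ∈ Finset.Ico K m, (((t:ℝ))⁻¹ - (((t:ℝ))+1)⁻¹) = ((K:ℝ))⁻¹ - ((m:ℝ))⁻¹ := by
    intro m hm
    induction m, hm using Nat.le_induction with
    | base => simp
    | succ m hm ih =>
      rw [Finset.sum_Ico_succ_top hm, ih]
      push_cast
      ring
  have hterm : ∀ t, K ≤ t →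
      p t ≤ ((t:ℝ))⁻¹ - (((t:ℝ))+1)⁻¹ ∧
      (2*(t:ℝ)+1) * p t ≤ 4*(((t:ℝ))⁻¹ - (((t:ℝ))+1)⁻¹) := by
    intro t ht
    have ht0 : (0:ℝ) < t := by
      have : (2:ℕ) ≤ t := le_trans hK2 ht
      exact_mod_cast lt_of_lt_of_le (by norm_num) this
    have ht1 : (0:ℝ) < (t:ℝ)+1 := by linarith
    have hdiff : ((t:ℝ))⁻¹ - (((t:ℝ))+1)⁻¹ = ((t:ℝ)*((t:ℝ)+1))⁻¹ := by
      field_simp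
      ring
    have hpt : p t = 2*(t:ℝ)/((t:ℝ)+1)^4 := by
      simp only [hpdef]; rw [div_eq_mul_inv]
    have hmons : (0:ℝ) ≤ t ∧ (0:ℝ) ≤ (t:ℝ)*(t:ℝ) ∧ (0:ℝ) ≤ (t:ℝ)*(t:ℝ)*(t:ℝ) ∧
        (0:ℝ) ≤ (t:ℝ)*(t:ℝ)*((t:ℝ)*(t:ℝ)) :=
      ⟨ht0.le, by positivity, by positivity, by positivity⟩
    obtain ⟨hm1, hm2, hm3, hm4⟩ := hmons
    constructor
    · rw [hpt, hdiff, inv_eq_one_div, div_le_div_iff₀ (by positivity) (by positivity)]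
      nlinarith
    · rw [hpt, hdiff, inv_eq_one_div, ← mul_div_assoc, mul_one_div,
        div_le_div_iff₀ (by positivity) (by positivity)]
      nlinarith
  have hKinv : ((K:ℝ))⁻¹ ≤ 2⁻¹ := by
    have h2 : (2:ℝ) ≤ (K:ℝ) := by exact_mod_cast hK2
    exact inv_anti₀ (by norm_num) h2
  have hninv : (0:ℝ) ≤ ((n:ℝ))⁻¹ := by positivity
  have hSp : ∑ t ∈ Finset.Ico K n, p t ≤ 1 := by
    calc ∑ t ∈ Finset.Ico K n, p t
        ≤ ∑ t ∈ Finset.Ico K n, (((t:ℝ))⁻¹ - (((t:ℝ))+1)⁻¹) :=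
          Finset.sum_le_sum (fun t htm => (hterm t (Finset.mem_Ico.mp htm).1).1)
      _ = ((K:ℝ))⁻¹ - ((n:ℝ))⁻¹ := htel n hn
      _ ≤ 1 := by linarith [hKinv, hninv]
  have hSq : ∑ t ∈ Finset.Ico K n, (2*(t:ℝ)+1) * p t ≤ 2 := by
    calc ∑ t ∈ Finset.Ico K n, (2*(t:ℝ)+1) * p t
        ≤ ∑ t ∈ Finset.Ico K n, 4*(((t:ℝ))⁻¹ - (((t:ℝ))+1)⁻¹) :=
          Finset.sum_le_sum (fun t htm => (hterm t (Finset.mem_Ico.mp htm).1).2)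
      _ = 4 * (((K:ℝ))⁻¹ - ((n:ℝ))⁻¹) := by rw [← Finset.mul_sum, htel n hn]
      _ ≤ 2 := by linarith [hKinv, hninv]
  -- put it together
  have hints : ∀ t ∈ Finset.Ico K n, ∫ ω, ind t ω ∂P ≤ p t := by
    intro t htm
    have hm := Finset.mem_Ico.mp htm
    exact hindInt t hm.1 hm.2
  have hintnn : ∀ t, 0 ≤ ∫ ω, ind t ω ∂P := fun t => integral_nonneg (hind_nonneg t)
  have hgle : ∫ ω, g ω ∂P ≤ (u':ℝ)^2 + 2*(u':ℝ) + 2 := by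
    rw [hgval]
    have e1 : ∑ t ∈ Finset.Ico K n, ∫ ω, ind t ω ∂P ≤ 1 :=
      le_trans (Finset.sum_le_sum hints) hSp
    have e2 : ∑ t ∈ Finset.Ico K n, (2*(t:ℝ)+1) * ∫ ω, ind t ω ∂P ≤ 2 := by
      refine le_trans (Finset.sum_le_sum (fun t htm => ?_)) hSq
      have hc : (0:ℝ) ≤ 2*(t:ℝ)+1 := by positivity
      exact mul_le_mul_of_nonneg_left (hints t htm) hc
    have hu'0 : (0:ℝ) ≤ (u':ℝ) := Nat.cast_nonneg _
    nlinarith [mul_le_mul_of_nonneg_left e1 (by linarith : (0:ℝ) ≤ 2*(u':ℝ))]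
  calc ∫ ω, ((T n k ω : ℝ))^2 ∂P ≤ ∫ ω, g ω ∂P := hmain
    _ ≤ (u':ℝ)^2 + 2*(u':ℝ) + 2 := hgle
    _ ≤ (x + 5)^2 := by
      have hu'0 : (0:ℝ) ≤ (u':ℝ) := Nat.cast_nonneg _
      nlinarith [hu'le, hx0, hu'0,
        mul_nonneg (sub_nonneg.mpr hu'le) (add_nonneg (by linarith : (0:ℝ) ≤ x + 2) hu'0)]
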